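/- There exists a constant C > 0 such that for all real numbers a > b ≥ 0 and all ε ∈ (0,1): P(D₁ ≤ ε^a and D₂ ≤ ε^b) ≤ C · ε^{a+2b}. -/

import Mathlib

open MeasureTheory ProbabilityTheory Real Filter

/-- Density of the Beta distribution `β(u,v)` with respect to Lebesgue measure. -/
noncomputable def betaPDFReal (u v x : ℝ) : ℝ :=
  if 0 < x ∧ x < 1 then
    Real.Gamma (u + v) / (Real.Gamma u * Real.Gamma v) * x ^ (u - 1) * (1 - x) ^ (v - 1)
  else 0

/-- The Beta distribution `β(u,v)` on `ℝ`. -/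
noncomputable def betaMeasure (u v : ℝ) : Measure ℝ :=
  volume.withDensity fun x => ENNReal.ofReal (_root_.betaPDFReal u v x)

/-- Density of the generalized Gamma distribution `GG(u,v)` w.r.t. Lebesgue measure. -/
noncomputable def genGammaPDFReal (u v x : ℝ) : ℝ :=
  if 0 < x then v / Real.Gamma (u / v) * x ^ (u - 1) * Real.exp (-(x ^ v)) else 0

/-- The generalized Gamma distribution `GG(u,v)` on `ℝ`. -/
noncomputable def genGammaMeasure (u v : ℝ) : Measure ℝ :=
  volume.withDensity fun x => ENNReal.ofReal (genGammaPDFReal u v x)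

open Set
open scoped ENNReal NNReal

section Aux

lemma measurable_betaPDF (u v : ℝ) :
    Measurable fun x => ENNReal.ofReal (_root_.betaPDFReal u v x) := by
  apply Measurable.ennreal_ofReal
  unfold _root_.betaPDFReal
  refine Measurable.ite (measurableSet_Ioo : MeasurableSet (Ioo (0:ℝ) 1)) ?_ measurable_const
  exact (measurable_const.mul (measurable_id.pow measurable_const)).mul
    ((measurable_const.sub measurable_id).pow measurable_const)

lemma measurable_ggPDF (u v : ℝ) :
    Measurable fun x => ENNReal.ofReal (genGammaPDFReal u v x) := by
  apply Measurable.ennreal_ofReal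
  unfold genGammaPDFReal
  refine Measurable.ite measurableSet_Ioi ?_ measurable_const
  exact (measurable_const.mul (measurable_id.pow measurable_const)).mul
    ((measurable_id.pow measurable_const).neg.exp)

lemma beta12_eq (x : ℝ) :
    _root_.betaPDFReal 1 2 x = if 0 < x ∧ x < 1 then 2 * (1 - x) else 0 := by
  unfold _root_.betaPDFReal
  split_ifs with h
  · have h3 : Real.Gamma ((1:ℝ) + 2) = 2 := by
      rw [show ((1:ℝ) + 2) = ((2:ℕ) : ℝ) + 1 by norm_num, Real.Gamma_nat_eq_factorial]
      norm_num [Nat.factorial]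
    have h2 : Real.Gamma (2:ℝ) = 1 := by
      rw [show ((2:ℝ)) = ((1:ℕ) : ℝ) + 1 by norm_num, Real.Gamma_nat_eq_factorial]
      norm_num [Nat.factorial]
    rw [h3, h2, Real.Gamma_one]
    norm_num [Real.rpow_one]
  · rfl

lemma beta31_eq (x : ℝ) :
    _root_.betaPDFReal 3 1 x = if 0 < x ∧ x < 1 then 3 * x ^ 2 else 0 := by
  unfold _root_.betaPDFReal
  split_ifs with h
  · have h4 : Real.Gamma ((3:ℝ) + 1) = 6 := by
      rw [show ((3:ℝ) + 1) = ((3:ℕ) : ℝ) + 1 by norm_num, Real.Gamma_nat_eq_factorial]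
      norm_num [Nat.factorial]
    have h3 : Real.Gamma (3:ℝ) = 2 := by
      rw [show ((3:ℝ)) = ((2:ℕ) : ℝ) + 1 by norm_num, Real.Gamma_nat_eq_factorial]
      norm_num [Nat.factorial]
    have hx2 : x ^ ((3:ℝ) - 1) = x ^ 2 := by
      rw [show ((3:ℝ) - 1) = ((2:ℕ) : ℝ) by norm_num, Real.rpow_natCast]
    rw [h4, h3, Real.Gamma_one, hx2]
    norm_num [Real.rpow_zero]
  · rfl

lemma gg52_eq (x : ℝ) :
    genGammaPDFReal 5 2 x
      = if 0 < x then 2 / Real.Gamma (5/2) * x ^ 4 * Real.exp (-(x ^ (2:ℝ))) else 0 := by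
  unfold genGammaPDFReal
  split_ifs with h
  · have hx4 : x ^ ((5:ℝ) - 1) = x ^ 4 := by
      rw [show ((5:ℝ) - 1) = ((4:ℕ) : ℝ) by norm_num, Real.rpow_natCast]
    rw [hx4]
  · rfl

lemma beta_Iic_zero (u v : ℝ) : _root_.betaMeasure u v (Iic 0) = 0 := by
  rw [_root_.betaMeasure, withDensity_apply _ measurableSet_Iic]
  have h : ∀ x ∈ Iic (0:ℝ), ENNReal.ofReal (_root_.betaPDFReal u v x) = 0 := by
    intro x hx
    have hx0 : x ≤ 0 := mem_Iic.mp hx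
    have hne : ¬ (0 < x ∧ x < 1) := fun hc => absurd hc.1 (not_lt.mpr hx0)
    simp [_root_.betaPDFReal, hne]
  rw [setLIntegral_congr_fun measurableSet_Iic h, lintegral_zero]

lemma gg_Iic_zero (u v : ℝ) : genGammaMeasure u v (Iic 0) = 0 := by
  rw [genGammaMeasure, withDensity_apply _ measurableSet_Iic]
  have h : ∀ x ∈ Iic (0:ℝ), ENNReal.ofReal (genGammaPDFReal u v x) = 0 := by
    intro x hx
    have hx0 : x ≤ 0 := mem_Iic.mp hx
    simp [genGammaPDFReal, not_lt.mpr hx0]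
  rw [setLIntegral_congr_fun measurableSet_Iic h, lintegral_zero]

lemma beta12_Iic {t : ℝ} (ht : 0 ≤ t) :
    _root_.betaMeasure 1 2 (Iic t) ≤ ENNReal.ofReal (2 * t) := by
  rw [_root_.betaMeasure, withDensity_apply _ measurableSet_Iic]
  calc ∫⁻ x in Iic t, ENNReal.ofReal (_root_.betaPDFReal 1 2 x) ∂volume
      ≤ ∫⁻ x in Iic t, (Ioi (0:ℝ)).indicator (fun _ => ENNReal.ofReal 2) x ∂volume := by
        refine lintegral_mono fun x => ?_
        rw [beta12_eq]
        split_ifs with h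
        · rw [indicator_of_mem (mem_Ioi.mpr h.1)]
          exact ENNReal.ofReal_le_ofReal (by nlinarith [h.1])
        · simp
    _ = ENNReal.ofReal 2 * volume (Ioi 0 ∩ Iic t) := by
        rw [lintegral_indicator measurableSet_Ioi, setLIntegral_const,
          Measure.restrict_apply measurableSet_Ioi]
    _ = ENNReal.ofReal (2 * t) := by
        rw [Set.Ioi_inter_Iic, Real.volume_Ioc, ← ENNReal.ofReal_mul (by norm_num)]
        norm_num

/-- Auxiliary bound function on the product of the values of `B₂ * Z₃`. -/
noncomputable def gAux (s δ w : ℝ) : ℝ≥0∞ :=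
  if 0 < w ∧ w ≤ δ then ENNReal.ofReal (2 * s / w) else 0

/-- Auxiliary bound function on the value of `Z₃`. -/
noncomputable def hAux (s δ z : ℝ) : ℝ≥0∞ :=
  if 0 < z then ENNReal.ofReal (6 * s * δ ^ 2 / z ^ 3) else 0

lemma measurable_gAux (s δ : ℝ) : Measurable (gAux s δ) := by
  unfold gAux
  refine Measurable.ite (measurableSet_Ioc : MeasurableSet (Ioc (0:ℝ) δ)) ?_ measurable_const
  exact (measurable_const.div measurable_id).ennreal_ofReal

lemma measurable_hAux (s δ : ℝ) : Measurable (hAux s δ) := by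
  unfold hAux
  refine Measurable.ite measurableSet_Ioi ?_ measurable_const
  exact (measurable_const.div (measurable_id.pow_const 3)).ennreal_ofReal

lemma inner_bound (s δ : ℝ) (hs : 0 ≤ s) (hδ : 0 ≤ δ) (z : ℝ) :
    ∫⁻ y, gAux s δ (y * z) ∂(_root_.betaMeasure 3 1) ≤ hAux s δ z := by
  have hgm : Measurable fun y => gAux s δ (y * z) :=
    (measurable_gAux s δ).comp (measurable_id.mul_const z)
  rw [_root_.betaMeasure, lintegral_withDensity_eq_lintegral_mul _ (measurable_betaPDF 3 1) hgm]
  simp only [Pi.mul_apply]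
  rcases le_or_gt z 0 with hz | hz
  · have hzero : ∀ y : ℝ, ENNReal.ofReal (_root_.betaPDFReal 3 1 y) * gAux s δ (y * z) = 0 := by
      intro y
      by_cases hy : 0 < y ∧ y < 1
      · have : ¬ (0 < y * z ∧ y * z ≤ δ) := fun ⟨h1, _⟩ =>
          absurd h1 (not_lt.mpr (mul_nonpos_of_nonneg_of_nonpos hy.1.le hz))
        rw [gAux, if_neg this, mul_zero]
      · rw [beta31_eq, if_neg hy, ENNReal.ofReal_zero, zero_mul]
    rw [lintegral_congr hzero, lintegral_zero]
    exact zero_le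
  · have hz0 : z ≠ 0 := ne_of_gt hz
    calc ∫⁻ y, ENNReal.ofReal (_root_.betaPDFReal 3 1 y) * gAux s δ (y * z) ∂volume
        ≤ ∫⁻ y, (Ioc 0 (δ / z)).indicator (fun _ => ENNReal.ofReal (6 * s * δ / z ^ 2)) y
            ∂volume := by
          refine lintegral_mono fun y => ?_
          by_cases hy : 0 < y ∧ y < 1
          · by_cases hyz : 0 < y * z ∧ y * z ≤ δ
            · have hy0 : y ≠ 0 := ne_of_gt hy.1
              have hyδz : y ≤ δ / z := (le_div_iff₀ hz).mpr hyz.2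
              rw [beta31_eq, if_pos hy, gAux, if_pos hyz,
                indicator_of_mem (mem_Ioc.mpr ⟨hy.1, hyδz⟩),
                ← ENNReal.ofReal_mul (by positivity)]
              apply ENNReal.ofReal_le_ofReal
              have h1 : 3 * y ^ 2 * (2 * s / (y * z)) = 6 * s * y / z := by
                field_simp; ring
              rw [h1, div_le_div_iff₀ hz (by positivity)]
              nlinarith [mul_nonneg (mul_nonneg (mul_nonneg (by norm_num : (0:ℝ) ≤ 6) hs) hz.le)
                (sub_nonneg.mpr hyz.2)]
            · rw [gAux, if_neg hyz, mul_zero]; exact zero_le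
          · rw [beta31_eq, if_neg hy, ENNReal.ofReal_zero, zero_mul]; exact zero_le
      _ = ENNReal.ofReal (6 * s * δ / z ^ 2) * volume (Ioc 0 (δ / z)) := by
          rw [lintegral_indicator measurableSet_Ioc, setLIntegral_const]
      _ = ENNReal.ofReal (6 * s * δ / z ^ 2) * ENNReal.ofReal (δ / z) := by
          rw [Real.volume_Ioc]; norm_num
      _ = ENNReal.ofReal (6 * s * δ ^ 2 / z ^ 3) := by
          rw [← ENNReal.ofReal_mul (by positivity)]
          congr 1
          field_simp
      _ = hAux s δ z := by rw [hAux, if_pos hz]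

lemma outer_bound (s δ : ℝ) (hs : 0 ≤ s) (hδ : 0 ≤ δ) :
    ∫⁻ z, hAux s δ z ∂(genGammaMeasure 5 2)
      ≤ ENNReal.ofReal (6 * s * δ ^ 2 / Real.Gamma (5/2)) := by
  have hΓ : 0 < Real.Gamma (5/2) := Real.Gamma_pos_of_pos (by norm_num)
  have hK : 0 ≤ 12 * s * δ ^ 2 / Real.Gamma (5/2) := by positivity
  rw [genGammaMeasure,
    lintegral_withDensity_eq_lintegral_mul _ (measurable_ggPDF 5 2) (measurable_hAux s δ)]
  simp only [Pi.mul_apply]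
  have key : ∀ z : ℝ, ENNReal.ofReal (genGammaPDFReal 5 2 z) * hAux s δ z
      = (Ioi (0:ℝ)).indicator
          (fun z => ENNReal.ofReal (12 * s * δ ^ 2 / Real.Gamma (5/2)
            * (z ^ (1:ℝ) * Real.exp (-z ^ (2:ℝ))))) z := by
    intro z
    rcases le_or_gt z 0 with hz | hz
    · rw [gg52_eq, if_neg (not_lt.mpr hz), hAux, if_neg (not_lt.mpr hz),
        indicator_of_notMem (fun hc => absurd (mem_Ioi.mp hc) (not_lt.mpr hz))]
      simp
    · have hz0 : z ≠ 0 := ne_of_gt hz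
      rw [gg52_eq, if_pos hz, hAux, if_pos hz, indicator_of_mem (mem_Ioi.mpr hz),
        ← ENNReal.ofReal_mul (by positivity)]
      congr 1
      rw [Real.rpow_one]
      field_simp
      ring
  rw [lintegral_congr key, lintegral_indicator measurableSet_Ioi]
  have hmeas : Measurable fun z : ℝ => ENNReal.ofReal (z ^ (1:ℝ) * Real.exp (-z ^ (2:ℝ))) := by
    measurability
  have hint : IntegrableOn (fun z : ℝ => z ^ (1:ℝ) * Real.exp (-z ^ (2:ℝ))) (Ioi 0) :=
    integrableOn_rpow_mul_exp_neg_rpow (by norm_num) (by norm_num)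
  have hnn : 0 ≤ᵐ[volume.restrict (Ioi (0:ℝ))]
      fun z : ℝ => z ^ (1:ℝ) * Real.exp (-z ^ (2:ℝ)) := by
    filter_upwards [ae_restrict_mem measurableSet_Ioi] with z hz
    exact le_of_lt (mul_pos (Real.rpow_pos_of_pos hz 1) (Real.exp_pos _))
  calc ∫⁻ z in Ioi 0, ENNReal.ofReal (12 * s * δ ^ 2 / Real.Gamma (5/2)
          * (z ^ (1:ℝ) * Real.exp (-z ^ (2:ℝ)))) ∂volume
      = ENNReal.ofReal (12 * s * δ ^ 2 / Real.Gamma (5/2))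
          * ∫⁻ z in Ioi 0, ENNReal.ofReal (z ^ (1:ℝ) * Real.exp (-z ^ (2:ℝ))) ∂volume := by
        simp_rw [ENNReal.ofReal_mul hK]
        rw [lintegral_const_mul _ hmeas]
    _ = ENNReal.ofReal (12 * s * δ ^ 2 / Real.Gamma (5/2))
          * ENNReal.ofReal (∫ z in Ioi 0, z ^ (1:ℝ) * Real.exp (-z ^ (2:ℝ)) ∂volume) := by
        rw [← ofReal_integral_eq_lintegral_ofReal hint hnn]
    _ = ENNReal.ofReal (12 * s * δ ^ 2 / Real.Gamma (5/2)) * ENNReal.ofReal (1/2) := by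
        rw [integral_rpow_mul_exp_neg_rpow (by norm_num) (by norm_num)]
        norm_num [Real.Gamma_one]
    _ ≤ ENNReal.ofReal (6 * s * δ ^ 2 / Real.Gamma (5/2)) := by
        rw [← ENNReal.ofReal_mul hK]
        apply ENNReal.ofReal_le_ofReal
        rw [div_mul_eq_mul_div, div_le_div_iff₀ hΓ hΓ]
        ring_nf
        nlinarith [hΓ, sq_nonneg δ, mul_nonneg hs (sq_nonneg δ)]

end Aux

/-- There is `C > 0` such that for all `a > b ≥ 0` and `ε ∈ (0,1)`,
`P(D₁ ≤ ε^a ∧ D₂ ≤ ε^b) ≤ C * ε^(a+2b)`, where `D₁ = B₁B₂Z₃` and `D₂ = (1-B₁)B₂Z₃`. -/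
theorem adam_eve_joint_bound {Ω : Type*} [MeasurableSpace Ω] (P : Measure Ω) [IsProbabilityMeasure P]
    (B₁ B₂ Z₃ : Ω → ℝ) (hB₁ : Measurable B₁) (hB₂ : Measurable B₂) (hZ₃ : Measurable Z₃)
    (hindep : iIndepFun ![B₁, B₂, Z₃] P)
    (hlaw₁ : P.map B₁ = _root_.betaMeasure 1 2)
    (hlaw₂ : P.map B₂ = _root_.betaMeasure 3 1)
    (hlaw₃ : P.map Z₃ = genGammaMeasure 5 2) :
    ∃ C : ℝ, 0 < C ∧ ∀ a b ε : ℝ, b < a → 0 ≤ b → 0 < ε → ε < 1 →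
      P {ω | B₁ ω * B₂ ω * Z₃ ω ≤ ε ^ a ∧ (1 - B₁ ω) * B₂ ω * Z₃ ω ≤ ε ^ b}
        ≤ ENNReal.ofReal (C * ε ^ (a + 2 * b)) := by
  have hΓ : 0 < Real.Gamma (5/2) := Real.Gamma_pos_of_pos (by norm_num)
  refine ⟨24 / Real.Gamma (5/2), by positivity, ?_⟩
  intro a b ε hba hb hε hε1
  set s : ℝ := ε ^ a with hsdef
  set δ : ℝ := 2 * ε ^ b with hδdef
  have hs0 : 0 < s := Real.rpow_pos_of_pos hε a
  have hεb : 0 < ε ^ b := Real.rpow_pos_of_pos hε b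
  have hδ0 : 0 < δ := by positivity
  have hεab : ε ^ a ≤ ε ^ b := Real.rpow_le_rpow_of_exponent_ge hε hε1.le hba.le
  set μ₁ := _root_.betaMeasure 1 2 with hμ₁
  set μ₂ := _root_.betaMeasure 3 1 with hμ₂
  set μ₃ := genGammaMeasure 5 2 with hμ₃
  haveI hsf1 : SFinite μ₁ := by rw [hμ₁]; unfold _root_.betaMeasure; infer_instance
  haveI hsf2 : SFinite μ₂ := by rw [hμ₂]; unfold _root_.betaMeasure; infer_instance
  haveI hsf3 : SFinite μ₃ := by rw [hμ₃]; unfold genGammaMeasure; infer_instance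
  -- independence facts
  have hmeas : ∀ i, Measurable (![B₁, B₂, Z₃] i) := by
    intro i; fin_cases i <;> simpa
  have hpair : IndepFun (fun ω => (B₂ ω, Z₃ ω)) B₁ P := by
    have := hindep.indepFun_prodMk hmeas 1 2 0 (by decide) (by decide)
    simpa using this
  have h23 : IndepFun B₂ Z₃ P := by
    have := hindep.indepFun (i := 1) (j := 2) (by decide)
    simpa using this
  have hmap23 : P.map (fun ω => (B₂ ω, Z₃ ω)) = μ₂.prod μ₃ := by
    rw [← hlaw₂, ← hlaw₃]
    exact (indepFun_iff_map_prod_eq_prod_map_map hB₂.aemeasurable hZ₃.aemeasurable).mp h23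
  have hmapφ : P.map (fun ω => ((B₂ ω, Z₃ ω), B₁ ω)) = (μ₂.prod μ₃).prod μ₁ := by
    rw [← hmap23, ← hlaw₁]
    exact (indepFun_iff_map_prod_eq_prod_map_map
      (hB₂.prodMk hZ₃).aemeasurable hB₁.aemeasurable).mp hpair
  -- the target set
  set T : Set ((ℝ × ℝ) × ℝ) :=
    {q | q.2 * (q.1.1 * q.1.2) ≤ s ∧ q.1.1 * q.1.2 ≤ δ} with hT
  have hm1 : Measurable fun q : (ℝ × ℝ) × ℝ => q.1.1 * q.1.2 :=
    (measurable_fst.fst).mul (measurable_fst.snd)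
  have hTmeas : MeasurableSet T :=
    (measurableSet_le (measurable_snd.mul hm1) measurable_const).inter
      (measurableSet_le hm1 measurable_const)
  have hφmeas : Measurable fun ω => ((B₂ ω, Z₃ ω), B₁ ω) := (hB₂.prodMk hZ₃).prodMk hB₁
  have hsub : {ω | B₁ ω * B₂ ω * Z₃ ω ≤ ε ^ a ∧ (1 - B₁ ω) * B₂ ω * Z₃ ω ≤ ε ^ b}
      ⊆ (fun ω => ((B₂ ω, Z₃ ω), B₁ ω)) ⁻¹' T := by
    intro ω hω
    obtain ⟨h1, h2⟩ := hω
    refine ⟨by simpa [mul_assoc] using h1, ?_⟩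
    have hkey : B₂ ω * Z₃ ω = B₁ ω * B₂ ω * Z₃ ω + (1 - B₁ ω) * B₂ ω * Z₃ ω := by ring
    show B₂ ω * Z₃ ω ≤ δ
    rw [hkey, hδdef]
    linarith
  -- null set for positivity
  have hμ₂0 : μ₂ (Iic 0) = 0 := beta_Iic_zero 3 1
  have hμ₃0 : μ₃ (Iic 0) = 0 := gg_Iic_zero 5 2
  have hN : (μ₂.prod μ₃) {p : ℝ × ℝ | ¬ (0 < p.1 ∧ 0 < p.2)} = 0 := by
    have hsub' : {p : ℝ × ℝ | ¬ (0 < p.1 ∧ 0 < p.2)}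
        ⊆ (Iic 0 ×ˢ univ) ∪ (univ ×ˢ Iic 0) := by
      intro p hp
      simp only [mem_setOf_eq, not_and_or, not_lt] at hp
      rcases hp with h | h
      · exact Or.inl ⟨h, trivial⟩
      · exact Or.inr ⟨trivial, h⟩
    refine measure_mono_null hsub' ?_
    refine le_antisymm ?_ (zero_le)
    calc (μ₂.prod μ₃) ((Iic 0 ×ˢ univ) ∪ (univ ×ˢ Iic 0))
        ≤ (μ₂.prod μ₃) (Iic 0 ×ˢ univ) + (μ₂.prod μ₃) (univ ×ˢ Iic 0) := measure_union_le _ _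
      _ = 0 := by rw [Measure.prod_prod, Measure.prod_prod, hμ₂0, hμ₃0]; simp
  have hae : ∀ᵐ p ∂(μ₂.prod μ₃), 0 < p.1 ∧ 0 < p.2 := by
    rw [ae_iff]; exact hN
  calc P {ω | B₁ ω * B₂ ω * Z₃ ω ≤ ε ^ a ∧ (1 - B₁ ω) * B₂ ω * Z₃ ω ≤ ε ^ b}
      ≤ P ((fun ω => ((B₂ ω, Z₃ ω), B₁ ω)) ⁻¹' T) := measure_mono hsub
    _ = ((μ₂.prod μ₃).prod μ₁) T := by rw [← hmapφ, Measure.map_apply hφmeas hTmeas]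
    _ = ∫⁻ p, μ₁ (Prod.mk p ⁻¹' T) ∂(μ₂.prod μ₃) := Measure.prod_apply hTmeas
    _ ≤ ∫⁻ p, gAux s δ (p.1 * p.2) ∂(μ₂.prod μ₃) := by
        refine lintegral_mono_ae ?_
        filter_upwards [hae] with p hp
        obtain ⟨h1, h2⟩ := hp
        have hw : 0 < p.1 * p.2 := mul_pos h1 h2
        by_cases hwδ : p.1 * p.2 ≤ δ
        · have hset : Prod.mk p ⁻¹' T = Iic (s / (p.1 * p.2)) := by
            ext x
            simp only [hT, mem_preimage, mem_setOf_eq, mem_Iic]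
            constructor
            · rintro ⟨hx, -⟩; exact (le_div_iff₀ hw).mpr hx
            · intro hx; exact ⟨(le_div_iff₀ hw).mp hx, hwδ⟩
          rw [hset, gAux, if_pos ⟨hw, hwδ⟩]
          calc μ₁ (Iic (s / (p.1 * p.2)))
              ≤ ENNReal.ofReal (2 * (s / (p.1 * p.2))) := beta12_Iic (by positivity)
            _ = ENNReal.ofReal (2 * s / (p.1 * p.2)) := by rw [mul_div_assoc]
        · have hset : Prod.mk p ⁻¹' T = ∅ := by
            ext x
            simp only [hT, mem_preimage, mem_setOf_eq, mem_empty_iff_false, iff_false,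
              not_and]
            intro _
            exact hwδ
          rw [hset]
          simp
    _ = ∫⁻ z, ∫⁻ y, gAux s δ (y * z) ∂μ₂ ∂μ₃ := by
        refine lintegral_prod_symm _ ?_
        exact ((measurable_gAux s δ).comp (measurable_fst.mul measurable_snd)).aemeasurable
    _ ≤ ∫⁻ z, hAux s δ z ∂μ₃ := lintegral_mono fun z => inner_bound s δ hs0.le hδ0.le z
    _ ≤ ENNReal.ofReal (6 * s * δ ^ 2 / Real.Gamma (5/2)) := outer_bound s δ hs0.le hδ0.le
    _ ≤ ENNReal.ofReal (24 / Real.Gamma (5/2) * ε ^ (a + 2 * b)) := by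
        apply ENNReal.ofReal_le_ofReal
        have hrw : ε ^ (a + 2 * b) = ε ^ a * (ε ^ b * ε ^ b) := by
          rw [show a + 2 * b = a + (b + b) by ring, Real.rpow_add hε, Real.rpow_add hε]
        rw [hrw, hsdef, hδdef]
        rw [div_le_iff₀ hΓ]
        field_simp
        ring_nf
        nlinarith [hΓ]
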